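/- Let n ≥ 1 and let A be an n×n complex matrix such that A_{j+1,j} ≠ 0 for every j with 1 ≤ j ≤ n−1, and A_{i,j} = 0 whenever i > j+1 (an unreduced lower Hessenberg matrix). Then the centralizer {B ∈ M_n(ℂ) : AB = BA} is a complex subspace of dimension exactly n. -/

import Mathlib

open Module

/-- The centralizer of a matrix `A` as a `ℂ`-subspace of the matrix algebra. -/
noncomputable def matCentC (n : ℕ) (A : Matrix (Fin n) (Fin n) ℂ) :
    Submodule ℂ (Matrix (Fin n) (Fin n) ℂ) where
  carrier := {B | A * B = B * A}
  add_mem' := by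
    intro X Y hX hY
    simp only [Set.mem_setOf_eq] at *
    rw [Matrix.mul_add, Matrix.add_mul, hX, hY]
  zero_mem' := by simp
  smul_mem' := by
    intro c X hX
    simp only [Set.mem_setOf_eq] at *
    rw [Matrix.mul_smul, Matrix.smul_mul, hX]

theorem stmt10 (n : ℕ) (hn : 1 ≤ n) (A : Matrix (Fin n) (Fin n) ℂ)
    (hsub : ∀ (j : ℕ) (hj : j + 1 < n), A ⟨j + 1, hj⟩ ⟨j, by omega⟩ ≠ 0)
    (hhess : ∀ i j : Fin n, (j : ℕ) + 1 < (i : ℕ) → A i j = 0) :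
    finrank ℂ (matCentC n A) = n := by
  classical
  set p0 : Fin n := ⟨0, hn⟩ with hp0
  set e0 : Fin n → ℂ := Pi.single p0 1 with he0
  -- key structural facts about A^k ⬝ e₀
  have key : ∀ k : ℕ, (∀ i : Fin n, k < (i : ℕ) → ((A ^ k).mulVec e0) i = 0) ∧
      (∀ hk : k < n, ((A ^ k).mulVec e0) ⟨k, hk⟩ ≠ 0) := by
    intro k
    induction k with
    | zero =>
      constructor
      · intro i hi
        simp only [pow_zero, Matrix.one_mulVec]
        have : i ≠ p0 := by
          intro h; rw [h] at hi; simp [hp0] at hi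
        simp [he0, Pi.single_apply, this]
      · intro hk
        have : (⟨0, hk⟩ : Fin n) = p0 := rfl
        simp [he0, this, Pi.single_apply]
    | succ k ih =>
      have hv0 := ih.1
      have hstep : (A ^ (k + 1)).mulVec e0 = A.mulVec ((A ^ k).mulVec e0) := by
        rw [Matrix.mulVec_mulVec, ← pow_succ']
      constructor
      · intro i hi
        rw [hstep]
        simp only [Matrix.mulVec, dotProduct]
        apply Finset.sum_eq_zero
        intro j _
        by_cases hj : k < (j : ℕ)
        · have hvj := hv0 j hj
          simp only [Matrix.mulVec, dotProduct] at hvj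
          rw [hvj, mul_zero]
        · have : (j : ℕ) + 1 < (i : ℕ) := by omega
          rw [hhess i j this, zero_mul]
      · intro hk
        rw [hstep]
        simp only [Matrix.mulVec, dotProduct]
        have hkn : k < n := by omega
        rw [Finset.sum_eq_single (⟨k, hkn⟩ : Fin n)]
        · have h2 := ih.2 hkn
          simp only [Matrix.mulVec, dotProduct] at h2
          exact mul_ne_zero (hsub k hk) h2
        · intro j _ hjne
          by_cases hj : k < (j : ℕ)
          · have hvj := hv0 j hj
            simp only [Matrix.mulVec, dotProduct] at hvj
            rw [hvj, mul_zero]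
          · have hjk : (j : ℕ) < k := by
              rcases lt_or_eq_of_le (not_lt.mp hj) with h | h
              · exact h
              · exact absurd (Fin.ext h) hjne
            have : (j : ℕ) + 1 < k + 1 := by omega
            rw [hhess ⟨k + 1, hk⟩ j this, zero_mul]
        · intro h; exact absurd (Finset.mem_univ _) h
  -- the matrix with columns A^k e₀
  set M : Matrix (Fin n) (Fin n) ℂ := fun i k => ((A ^ (k : ℕ)).mulVec e0) i with hM
  have hMtri : M.BlockTriangular id := by
    intro i k hik
    exact (key (k : ℕ)).1 i hik
  have hdet : IsUnit M.det := by
    rw [Matrix.det_of_upperTriangular hMtri]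
    refine isUnit_iff_ne_zero.mpr (Finset.prod_ne_zero_iff.mpr fun i _ => ?_)
    have := (key (i : ℕ)).2 i.isLt
    simpa [hM] using this
  -- the linear map B ↦ B e₀ on the centralizer
  let φ : matCentC n A →ₗ[ℂ] (Fin n → ℂ) :=
    { toFun := fun B => (B : Matrix (Fin n) (Fin n) ℂ).mulVec e0
      map_add' := by intro X Y; simp [Matrix.add_mulVec]
      map_smul' := by intro c X; simp [Matrix.smul_mulVec] }
  have hinj : Function.Injective φ := by
    rw [injective_iff_map_eq_zero]
    intro B hB
    have hcomm : A * (B : Matrix (Fin n) (Fin n) ℂ) = (B : Matrix (Fin n) (Fin n) ℂ) * A := B.2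
    have hBM : (B : Matrix (Fin n) (Fin n) ℂ) * M = 0 := by
      ext i k
      have hB0 : (B : Matrix (Fin n) (Fin n) ℂ).mulVec e0 = 0 := hB
      have hc : (B : Matrix (Fin n) (Fin n) ℂ) * A ^ (k : ℕ)
          = A ^ (k : ℕ) * (B : Matrix (Fin n) (Fin n) ℂ) :=
        ((Commute.symm hcomm).pow_right _)
      have h1 : ((B : Matrix (Fin n) (Fin n) ℂ) * M) i k =
          ((B : Matrix (Fin n) (Fin n) ℂ)).mulVec ((A ^ (k : ℕ)).mulVec e0) i := by
        rw [Matrix.mul_apply]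
        simp [Matrix.mul_apply, Matrix.mulVec, dotProduct, hM]
      rw [h1, Matrix.mulVec_mulVec, hc, ← Matrix.mulVec_mulVec, hB0, Matrix.mulVec_zero]
      simp
    have : (B : Matrix (Fin n) (Fin n) ℂ) = 0 := by
      have := congrArg (· * M⁻¹) hBM
      simpa [Matrix.mul_assoc, Matrix.mul_nonsing_inv M hdet] using this
    exact Subtype.ext this
  have hsurj : Function.Surjective φ := by
    intro w
    set c : Fin n → ℂ := M⁻¹.mulVec w with hc
    set B : Matrix (Fin n) (Fin n) ℂ := ∑ k : Fin n, c k • A ^ (k : ℕ) with hB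
    have hmem : B ∈ matCentC n A := by
      show A * B = B * A
      rw [hB, Matrix.mul_sum, Matrix.sum_mul]
      refine Finset.sum_congr rfl fun k _ => ?_
      rw [Matrix.mul_smul, Matrix.smul_mul, ← pow_succ', ← pow_succ]
    refine ⟨⟨B, hmem⟩, ?_⟩
    show B.mulVec e0 = w
    have h12 : B.mulVec e0 = M.mulVec c := by
      ext i
      simp only [hB, Matrix.mulVec, dotProduct, Matrix.sum_apply, Matrix.smul_apply,
        Finset.sum_mul, smul_eq_mul, hM]
      rw [Finset.sum_comm]
      refine Finset.sum_congr rfl fun k _ => ?_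
      refine Finset.sum_congr rfl fun j _ => ?_
      ring
    rw [h12, hc, Matrix.mulVec_mulVec, Matrix.mul_nonsing_inv M hdet, Matrix.one_mulVec]
  have := LinearEquiv.finrank_eq (LinearEquiv.ofBijective φ ⟨hinj, hsurj⟩)
  rw [this, finrank_fin_fun]
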